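/- Theorem (unconditional energy stability of the fully discrete SAV-MAC scheme): in the absence of the external force (f₁^{n+1/2}=f₂^{n+1/2}=0), if (U^{n+1}, P^{n+1/2}, Q^{n+1}) solves one step of the fully discrete SAV-MAC scheme, then for any Δt>0 the discrete energy law |Q^{n+1}|² − |Q^n|² = −ν Δt ‖DU^{n+1/2}‖² holds for all n ≥ 0. -/

import Mathlib

open Finset

noncomputable section

namespace SAVMAC

/-- A staggered-grid function, indexed by (possibly extended) integer indices.
For a `u1`-type function, `f i j` is the value at `(x_i, y_{j+1/2})` (with the
boundary conventions `y_{-1/2} = y_0`, `y_{N_y+1/2} = y_{N_y}` for `j = -1, N_y`).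
For a `u2`-type function, `f i j` is the value at `(x_{i+1/2}, y_j)` (with
`x_{-1/2} = x_0`, `x_{N_x+1/2} = x_{N_x}` for `i = -1, N_x`).
For a cell-centered function, `f i j` is the value at `(x_{i+1/2}, y_{j+1/2})`. -/
abbrev G := ℤ → ℤ → ℝ

/-- The mesh weight `k_j` (`= k` in the interior, `k/2` at the boundary). -/
def kw (Ny : ℕ) (k : ℝ) (j : ℤ) : ℝ := if j = 0 ∨ j = (Ny : ℤ) then k / 2 else k

/-- The mesh weight `h_i`. -/
def hw (Nx : ℕ) (h : ℝ) (i : ℤ) : ℝ := if i = 0 ∨ i = (Nx : ℤ) then h / 2 else h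

/-- The inner product `(f,g)_{l²,M}` of cell-centered functions. -/
def ipM (Nx Ny : ℕ) (h k : ℝ) (f g : G) : ℝ :=
  ∑ i ∈ Finset.range Nx, ∑ j ∈ Finset.range Ny, h * k * f (i : ℤ) (j : ℤ) * g (i : ℤ) (j : ℤ)

/-- The inner product `(f,g)_{l²,T,M}` of `u1`-type functions. -/
def ipTM (Nx Ny : ℕ) (h k : ℝ) (f g : G) : ℝ :=
  ∑ i ∈ Finset.Ico 1 Nx, ∑ j ∈ Finset.range Ny, h * k * f (i : ℤ) (j : ℤ) * g (i : ℤ) (j : ℤ)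

/-- The inner product `(f,g)_{l²,M,T}` of `u2`-type functions. -/
def ipMT (Nx Ny : ℕ) (h k : ℝ) (f g : G) : ℝ :=
  ∑ i ∈ Finset.range Nx, ∑ j ∈ Finset.Ico 1 Ny, h * k * f (i : ℤ) (j : ℤ) * g (i : ℤ) (j : ℤ)

/-- The inner product `(f,g)_{l²,T_y}` of functions living at the nodes `(x_i, y_j)`,
`1 ≤ i ≤ N_x-1`, `0 ≤ j ≤ N_y`. -/
def ipTy (Nx Ny : ℕ) (h k : ℝ) (f g : G) : ℝ :=
  ∑ i ∈ Finset.Ico 1 Nx, ∑ j ∈ Finset.range (Ny + 1), h * kw Ny k j * f (i : ℤ) (j : ℤ) * g (i : ℤ) (j : ℤ)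

/-- The inner product `(f,g)_{l²,T_x}` of functions living at the nodes `(x_i, y_j)`,
`0 ≤ i ≤ N_x`, `1 ≤ j ≤ N_y-1`. -/
def ipTx (Nx Ny : ℕ) (h k : ℝ) (f g : G) : ℝ :=
  ∑ i ∈ Finset.range (Nx + 1), ∑ j ∈ Finset.Ico 1 Ny, hw Nx h i * k * f (i : ℤ) (j : ℤ) * g (i : ℤ) (j : ℤ)

/-- `‖U‖²_{l²}` for a velocity pair. -/
def l2sq (Nx Ny : ℕ) (h k : ℝ) (v1 v2 : G) : ℝ :=
  ipTM Nx Ny h k v1 v1 + ipMT Nx Ny h k v2 v2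

/-- `(U,V)_{l²}` for velocity pairs. -/
def ipl2 (Nx Ny : ℕ) (h k : ℝ) (v1 v2 w1 w2 : G) : ℝ :=
  ipTM Nx Ny h k v1 w1 + ipMT Nx Ny h k v2 w2

/-- `d_x`: half-index difference in `x`, `[d_x f]_{i+1/2,m} = (f_{i+1,m}-f_{i,m})/h`. -/
def dX (h : ℝ) (f : G) : G := fun i j => (f (i + 1) j - f i j) / h

/-- `d_y`: half-index difference in `y`. -/
def dY (k : ℝ) (f : G) : G := fun i j => (f i (j + 1) - f i j) / k

/-- `D_x`: integer-index difference in `x`, `[D_x f]_{i,m} = (f_{i+1/2,m}-f_{i-1/2,m})/h_i`. -/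
def DX (Nx : ℕ) (h : ℝ) (f : G) : G := fun i j => (f i j - f (i - 1) j) / hw Nx h i

/-- `D_y`: integer-index difference in `y`. -/
def DY (Ny : ℕ) (k : ℝ) (f : G) : G := fun i j => (f i j - f i (j - 1)) / kw Ny k j

/-- `D_x(d_x f)` at a `u1`-node. -/
def DXdX (h : ℝ) (f : G) : G := fun i j => (f (i + 1) j - 2 * f i j + f (i - 1) j) / h ^ 2

/-- `d_y(D_y f)` at a `u1`-node (with the half-cell convention at the boundary). -/
def dYDY (Ny : ℕ) (k : ℝ) (f : G) : G := fun i j => (DY Ny k f i (j + 1) - DY Ny k f i j) / k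

/-- `D_y(d_y f)` at a `u2`-node. -/
def DYdY (k : ℝ) (f : G) : G := fun i j => (f i (j + 1) - 2 * f i j + f i (j - 1)) / k ^ 2

/-- `d_x(D_x f)` at a `u2`-node (with the half-cell convention at the boundary). -/
def dXDX (Nx : ℕ) (h : ℝ) (f : G) : G := fun i j => (DX Nx h f (i + 1) j - DX Nx h f i j) / h

/-- `‖DU‖²` for a velocity pair. -/
def Dsq (Nx Ny : ℕ) (h k : ℝ) (v1 v2 : G) : ℝ :=
  ipM Nx Ny h k (dX h v1) (dX h v1) + ipTy Nx Ny h k (DY Ny k v1) (DY Ny k v1)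
    + ipTx Nx Ny h k (DX Nx h v2) (DX Nx h v2) + ipM Nx Ny h k (dY k v2) (dY k v2)

/-- Homogeneous Dirichlet boundary conditions for a staggered velocity pair. -/
def BC (Nx Ny : ℕ) (v1 v2 : G) : Prop :=
  (∀ j : ℤ, v1 0 j = 0 ∧ v1 (Nx : ℤ) j = 0) ∧
  (∀ i : ℤ, v1 i (-1) = 0 ∧ v1 i (Ny : ℤ) = 0) ∧
  (∀ j : ℤ, v2 (-1) j = 0 ∧ v2 (Nx : ℤ) j = 0) ∧
  (∀ i : ℤ, v2 i 0 = 0 ∧ v2 i (Ny : ℤ) = 0)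

/-- Discrete incompressibility `d_x v1 + d_y v2 = 0` at all cell centers. -/
def DivFree (Nx Ny : ℕ) (h k : ℝ) (v1 v2 : G) : Prop :=
  ∀ i j : ℤ, 0 ≤ i → i < (Nx : ℤ) → 0 ≤ j → j < (Ny : ℤ) →
    dX h v1 i j + dY k v2 i j = 0

/-- The value of the bilinear interpolant `P_h f` of a `u1`-type function at the integer
node `(x_i, y_j)` (respecting the boundary half-cells). -/
def avgY (Ny : ℕ) (f : G) : G := fun i j =>
  if j = 0 then f i (-1) else if j = (Ny : ℤ) then f i (Ny : ℤ) else (f i (j - 1) + f i j) / 2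

/-- The value of the bilinear interpolant `P_h f` of a `u2`-type function at the integer
node `(x_i, y_j)` (respecting the boundary half-cells). -/
def avgX (Nx : ℕ) (f : G) : G := fun i j =>
  if i = 0 then f (-1) j else if i = (Nx : ℤ) then f (Nx : ℤ) j else (f (i - 1) j + f i j) / 2

/-- First component of the explicit nonlinear term
`Ũ₁ D_x(P_h Ũ₁) + P_h Ũ₂ d_y(P_h Ũ₁)` at the `u1`-node `(x_i, y_{j+1/2})`. -/
def N1 (Ny : ℕ) (h k : ℝ) (w1 w2 : G) : G := fun i j =>
  w1 i j * ((w1 (i + 1) j - w1 (i - 1) j) / (2 * h)) +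
    ((w2 (i - 1) j + w2 i j + w2 (i - 1) (j + 1) + w2 i (j + 1)) / 4) *
      ((avgY Ny w1 i (j + 1) - avgY Ny w1 i j) / k)

/-- Second component of the explicit nonlinear term
`P_h Ũ₁ d_x(P_h Ũ₂) + Ũ₂ D_y(P_h Ũ₂)` at the `u2`-node `(x_{i+1/2}, y_j)`. -/
def N2 (Nx : ℕ) (h k : ℝ) (w1 w2 : G) : G := fun i j =>
  ((w1 i (j - 1) + w1 (i + 1) (j - 1) + w1 i j + w1 (i + 1) j) / 4) *
      ((avgX Nx w2 (i + 1) j - avgX Nx w2 i j) / h) +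
    w2 i j * ((w2 i (j + 1) - w2 i (j - 1)) / (2 * k))

/-- `B^{n+1/2} = √(E_h(Ũ^{n+1/2}) + δ)`. -/
def Bh (Nx Ny : ℕ) (h k δ : ℝ) (w1 w2 : G) : ℝ :=
  Real.sqrt (l2sq Nx Ny h k w1 w2 / 2 + δ)

/-- One step of the fully discrete SAV-MAC scheme: given the extrapolated velocity
`Ũ^{n+1/2} = (w1,w2)`, the old velocity `U^n = (u1,u2)` and old SAV value `Qn`, the
data `f^{n+1/2} = (f1,f2)`, the new iterate `U^{n+1} = (v1,v2)`, `P^{n+1/2} = P`,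
`Q^{n+1} = Qn1` satisfies the momentum equations, the SAV update, discrete
incompressibility and the boundary conditions; moreover `Q^{n+1/2} ≠ 0`. -/
def SchemeStep (Nx Ny : ℕ) (h k Δt ν δ : ℝ) (f1 f2 w1 w2 u1 u2 v1 v2 P : G)
    (Qn Qn1 : ℝ) : Prop :=
  (Qn + Qn1) / 2 ≠ 0 ∧
  (∀ i j : ℤ, 1 ≤ i → i < (Nx : ℤ) → 0 ≤ j → j < (Ny : ℤ) →
    (v1 i j - u1 i j) / Δt
      + ((Qn + Qn1) / 2 / Bh Nx Ny h k δ w1 w2) * N1 Ny h k w1 w2 i j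
      - ν * DXdX h (fun a b => (u1 a b + v1 a b) / 2) i j
      - ν * dYDY Ny k (fun a b => (u1 a b + v1 a b) / 2) i j
      + DX Nx h P i j = f1 i j) ∧
  (∀ i j : ℤ, 0 ≤ i → i < (Nx : ℤ) → 1 ≤ j → j < (Ny : ℤ) →
    (v2 i j - u2 i j) / Δt
      + ((Qn + Qn1) / 2 / Bh Nx Ny h k δ w1 w2) * N2 Nx h k w1 w2 i j
      - ν * DYdY k (fun a b => (u2 a b + v2 a b) / 2) i j
      - ν * dXDX Nx h (fun a b => (u2 a b + v2 a b) / 2) i j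
      + DY Ny k P i j = f2 i j) ∧
  ((Qn1 - Qn) / Δt
      = (1 / (2 * Bh Nx Ny h k δ w1 w2)) *
          ipl2 Nx Ny h k (N1 Ny h k w1 w2) (N2 Nx h k w1 w2)
            (fun a b => (u1 a b + v1 a b) / 2) (fun a b => (u2 a b + v2 a b) / 2)
        + (1 / (2 * ((Qn + Qn1) / 2))) *
          ipl2 Nx Ny h k (fun a b => (v1 a b - u1 a b) / Δt) (fun a b => (v2 a b - u2 a b) / Δt)
            (fun a b => (u1 a b + v1 a b) / 2) (fun a b => (u2 a b + v2 a b) / 2)) ∧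
  DivFree Nx Ny h k v1 v2 ∧
  BC Nx Ny v1 v2

lemma abel_aux (m : ℕ) (hm : 1 ≤ m) (P V : ℕ → ℝ) (hV0 : V 0 = 0) (hVm : V m = 0) :
    ∑ i ∈ Finset.Ico 1 m, (P i - P (i - 1)) * V i
      = -∑ i ∈ Finset.range m, P i * (V (i + 1) - V i) := by
  obtain ⟨m', rfl⟩ : ∃ m', m = m' + 1 := ⟨m - 1, by omega⟩
  have hA2 : ∑ i ∈ Finset.Ico 1 (m' + 1), P (i - 1) * V i
      = ∑ i ∈ Finset.range m', P i * V (i + 1) := by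
    rw [Finset.sum_Ico_eq_sum_range]
    apply Finset.sum_congr (by simp)
    intro i _
    congr 1
    · congr 1; omega
    · congr 1; omega
  have hB1 : ∑ i ∈ Finset.range (m' + 1), P i * V (i + 1)
      = ∑ i ∈ Finset.range m', P i * V (i + 1) := by
    rw [Finset.sum_range_succ, hVm, mul_zero, add_zero]
  have hB2 : ∑ i ∈ Finset.range (m' + 1), P i * V i
      = ∑ i ∈ Finset.Ico 1 (m' + 1), P i * V i := by
    rw [Finset.range_eq_Ico, Finset.sum_eq_sum_Ico_succ_bot (by omega), hV0, mul_zero, zero_add]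
  have e1 : ∑ i ∈ Finset.Ico 1 (m' + 1), (P i - P (i - 1)) * V i
      = ∑ i ∈ Finset.Ico 1 (m' + 1), P i * V i - ∑ i ∈ Finset.Ico 1 (m' + 1), P (i - 1) * V i := by
    rw [← Finset.sum_sub_distrib]; apply Finset.sum_congr rfl; intros; ring
  have e2 : ∑ i ∈ Finset.range (m' + 1), P i * (V (i + 1) - V i)
      = ∑ i ∈ Finset.range (m' + 1), P i * V (i + 1) - ∑ i ∈ Finset.range (m' + 1), P i * V i := by
    rw [← Finset.sum_sub_distrib]; apply Finset.sum_congr rfl; intros; ring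
  rw [e1, e2, hA2, hB1, hB2]; ring

/-- second-order summation by parts, uniform weights -/
lemma visc_aux (m : ℕ) (hm : 1 ≤ m) (V : ℕ → ℝ) (hV0 : V 0 = 0) (hVm : V m = 0) :
    ∑ i ∈ Finset.Ico 1 m, (V (i + 1) - 2 * V i + V (i - 1)) * V i
      = -∑ i ∈ Finset.range m, (V (i + 1) - V i) ^ 2 := by
  have := abel_aux m hm (fun i => V (i + 1) - V i) V hV0 hVm
  have e : ∑ i ∈ Finset.Ico 1 m, (V (i + 1) - 2 * V i + V (i - 1)) * V i
      = ∑ i ∈ Finset.Ico 1 m, ((fun i => V (i + 1) - V i) i - (fun i => V (i + 1) - V i) (i - 1)) * V i := by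
    apply Finset.sum_congr rfl
    intro i hi
    simp only [Finset.mem_Ico] at hi
    have : i - 1 + 1 = i := by omega
    simp only [this]; ring
  rw [e, this]
  congr 1
  apply Finset.sum_congr rfl
  intros; ring

/-- weighted second-order summation by parts (half cells at boundary) -/
lemma visc_w_aux (m : ℕ) (hm : 1 ≤ m) (k : ℝ) (hk : k ≠ 0) (V G : ℕ → ℝ)
    (hG0 : G 0 = V 0 / (k / 2))
    (hGm : G m = -V (m - 1) / (k / 2))
    (hGint : ∀ j, 1 ≤ j → j < m → G j = (V j - V (j - 1)) / k) :
    ∑ j ∈ Finset.range m, (G (j + 1) - G j) * V j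
      = -∑ j ∈ Finset.range (m + 1), (if j = 0 ∨ j = m then k / 2 else k) * G j ^ 2 := by
  obtain ⟨m', rfl⟩ : ∃ m', m = m' + 1 := ⟨m - 1, by omega⟩
  have e1 : ∑ j ∈ Finset.range (m' + 1), (G (j + 1) - G j) * V j
      = ∑ j ∈ Finset.range (m' + 1), G (j + 1) * V j - ∑ j ∈ Finset.range (m' + 1), G j * V j := by
    rw [← Finset.sum_sub_distrib]; apply Finset.sum_congr rfl; intros; ring
  -- ∑_{range (m'+1)} G_{j+1} V_j = ∑_{Ico 1 (m'+2)} G_j V_{j-1}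
  have e2 : ∑ j ∈ Finset.range (m' + 1), G (j + 1) * V j
      = ∑ j ∈ Finset.Ico 1 (m' + 2), G j * V (j - 1) := by
    rw [Finset.sum_Ico_eq_sum_range]
    apply Finset.sum_congr rfl
    intro i _
    congr 1
    · congr 1; omega
    · congr 1; omega
  have e3 : ∑ j ∈ Finset.Ico 1 (m' + 2), G j * V (j - 1)
      = ∑ j ∈ Finset.Ico 1 (m' + 1), G j * V (j - 1) + G (m' + 1) * V m' := by
    rw [Finset.sum_Ico_succ_top (by omega)]; norm_num
  have e4 : ∑ j ∈ Finset.range (m' + 1), G j * V j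
      = G 0 * V 0 + ∑ j ∈ Finset.Ico 1 (m' + 1), G j * V j := by
    rw [Finset.range_eq_Ico, Finset.sum_eq_sum_Ico_succ_bot (by omega)]
  -- boundary identities
  have hb0 : G 0 * V 0 = (k / 2) * G 0 ^ 2 := by
    rw [hG0]; field_simp
  have hbm : G (m' + 1) * V m' = -((k / 2) * G (m' + 1) ^ 2) := by
    have : V m' = -(k / 2 * G (m' + 1)) := by
      rw [hGm, Nat.add_sub_cancel]; field_simp
    rw [this]; ring
  have hint : ∑ j ∈ Finset.Ico 1 (m' + 1), G j * V (j - 1) - ∑ j ∈ Finset.Ico 1 (m' + 1), G j * V j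
      = -∑ j ∈ Finset.Ico 1 (m' + 1), k * G j ^ 2 := by
    rw [← Finset.sum_sub_distrib, ← Finset.sum_neg_distrib]
    apply Finset.sum_congr rfl
    intro j hj
    simp only [Finset.mem_Ico] at hj
    have hGj := hGint j hj.1 hj.2
    have : V (j - 1) - V j = -(k * G j) := by rw [hGj]; field_simp; ring
    calc G j * V (j - 1) - G j * V j = G j * (V (j - 1) - V j) := by ring
    _ = -(k * G j ^ 2) := by rw [this]; ring
  -- RHS split
  have eR : ∑ j ∈ Finset.range (m' + 2), (if j = 0 ∨ j = m' + 1 then k / 2 else k) * G j ^ 2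
      = (k / 2) * G 0 ^ 2 + ∑ j ∈ Finset.Ico 1 (m' + 1), k * G j ^ 2 + (k / 2) * G (m' + 1) ^ 2 := by
    rw [Finset.sum_range_succ, Finset.range_eq_Ico, Finset.sum_eq_sum_Ico_succ_bot (by omega)]
    simp only [if_pos (Or.inl rfl), if_pos (Or.inr rfl)]
    congr 1
    congr 1
    apply Finset.sum_congr rfl
    intro j hj
    simp only [Finset.mem_Ico] at hj
    rw [if_neg (by omega)]
  rw [e1, e2, e3, e4, eR]
  have := hint
  nlinarith [hb0, hbm, hint]

/-- x-direction viscous sum for a u1-type function. -/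
lemma sum_DXdX_u1 (Nx Ny : ℕ) (hNx : 1 ≤ Nx) (h k : ℝ) (hh : h ≠ 0) (V1 : G)
    (hb : ∀ j : ℤ, V1 0 j = 0 ∧ V1 (Nx : ℤ) j = 0) :
    ∑ i ∈ Finset.Ico 1 Nx, ∑ j ∈ Finset.range Ny, h * k * DXdX h V1 (i : ℤ) (j : ℤ) * V1 (i : ℤ) (j : ℤ)
      = -ipM Nx Ny h k (dX h V1) (dX h V1) := by
  unfold ipM
  calc ∑ i ∈ Finset.Ico 1 Nx, ∑ j ∈ Finset.range Ny, h * k * DXdX h V1 (i : ℤ) (j : ℤ) * V1 (i : ℤ) (j : ℤ)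
      = ∑ j ∈ Finset.range Ny, ∑ i ∈ Finset.Ico 1 Nx, h * k * DXdX h V1 (i : ℤ) (j : ℤ) * V1 (i : ℤ) (j : ℤ) :=
        Finset.sum_comm
    _ = ∑ j ∈ Finset.range Ny, -(∑ i ∈ Finset.range Nx, h * k * dX h V1 (i : ℤ) (j : ℤ) * dX h V1 (i : ℤ) (j : ℤ)) := by
        apply Finset.sum_congr rfl
        intro j _
        have key := visc_aux Nx hNx (fun i : ℕ => V1 (i : ℤ) (j : ℤ)) ((hb (j : ℤ)).1) ((hb (j : ℤ)).2)
        calc ∑ i ∈ Finset.Ico 1 Nx, h * k * DXdX h V1 (i : ℤ) (j : ℤ) * V1 (i : ℤ) (j : ℤ)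
            = ∑ i ∈ Finset.Ico 1 Nx, (k / h) *
                ((V1 ((i + 1 : ℕ) : ℤ) (j : ℤ) - 2 * V1 (i : ℤ) (j : ℤ) + V1 ((i - 1 : ℕ) : ℤ) (j : ℤ)) * V1 (i : ℤ) (j : ℤ)) := by
              apply Finset.sum_congr rfl
              intro i hi
              simp only [Finset.mem_Ico] at hi
              have c1 : ((i + 1 : ℕ) : ℤ) = (i : ℤ) + 1 := by push_cast; ring
              have c2 : ((i - 1 : ℕ) : ℤ) = (i : ℤ) - 1 := by omega
              rw [c1, c2]
              unfold DXdX
              field_simp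
          _ = (k / h) * ∑ i ∈ Finset.Ico 1 Nx,
                ((V1 ((i + 1 : ℕ) : ℤ) (j : ℤ) - 2 * V1 (i : ℤ) (j : ℤ) + V1 ((i - 1 : ℕ) : ℤ) (j : ℤ)) * V1 (i : ℤ) (j : ℤ)) := by
              rw [Finset.mul_sum]
          _ = (k / h) * -(∑ i ∈ Finset.range Nx, (V1 ((i + 1 : ℕ) : ℤ) (j : ℤ) - V1 (i : ℤ) (j : ℤ)) ^ 2) := by
              rw [key]
          _ = -(∑ i ∈ Finset.range Nx, h * k * dX h V1 (i : ℤ) (j : ℤ) * dX h V1 (i : ℤ) (j : ℤ)) := by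
              rw [mul_neg, neg_inj, Finset.mul_sum]
              apply Finset.sum_congr rfl
              intro i _
              have c1 : ((i + 1 : ℕ) : ℤ) = (i : ℤ) + 1 := by push_cast; ring
              rw [c1]
              unfold dX
              field_simp
    _ = -(∑ j ∈ Finset.range Ny, ∑ i ∈ Finset.range Nx, h * k * dX h V1 (i : ℤ) (j : ℤ) * dX h V1 (i : ℤ) (j : ℤ)) := by
        rw [← Finset.sum_neg_distrib]
    _ = -∑ i ∈ Finset.range Nx, ∑ j ∈ Finset.range Ny, h * k * dX h V1 (i : ℤ) (j : ℤ) * dX h V1 (i : ℤ) (j : ℤ) := by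
        rw [neg_inj]
        exact Finset.sum_comm

/-- y-direction viscous sum for a u2-type function. -/
lemma sum_DYdY_u2 (Nx Ny : ℕ) (hNy : 1 ≤ Ny) (h k : ℝ) (hk : k ≠ 0) (V2 : G)
    (hb : ∀ i : ℤ, V2 i 0 = 0 ∧ V2 i (Ny : ℤ) = 0) :
    ∑ i ∈ Finset.range Nx, ∑ j ∈ Finset.Ico 1 Ny, h * k * DYdY k V2 (i : ℤ) (j : ℤ) * V2 (i : ℤ) (j : ℤ)
      = -ipM Nx Ny h k (dY k V2) (dY k V2) := by
  unfold ipM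
  rw [← Finset.sum_neg_distrib]
  apply Finset.sum_congr rfl
  intro i _
  have key := visc_aux Ny hNy (fun j : ℕ => V2 (i : ℤ) (j : ℤ)) ((hb (i : ℤ)).1) ((hb (i : ℤ)).2)
  calc ∑ j ∈ Finset.Ico 1 Ny, h * k * DYdY k V2 (i : ℤ) (j : ℤ) * V2 (i : ℤ) (j : ℤ)
      = ∑ j ∈ Finset.Ico 1 Ny, (h / k) *
          ((V2 (i : ℤ) ((j + 1 : ℕ) : ℤ) - 2 * V2 (i : ℤ) (j : ℤ) + V2 (i : ℤ) ((j - 1 : ℕ) : ℤ)) * V2 (i : ℤ) (j : ℤ)) := by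
        apply Finset.sum_congr rfl
        intro j hj
        simp only [Finset.mem_Ico] at hj
        have c1 : ((j + 1 : ℕ) : ℤ) = (j : ℤ) + 1 := by push_cast; ring
        have c2 : ((j - 1 : ℕ) : ℤ) = (j : ℤ) - 1 := by omega
        rw [c1, c2]
        unfold DYdY
        field_simp
    _ = (h / k) * ∑ j ∈ Finset.Ico 1 Ny,
          ((V2 (i : ℤ) ((j + 1 : ℕ) : ℤ) - 2 * V2 (i : ℤ) (j : ℤ) + V2 (i : ℤ) ((j - 1 : ℕ) : ℤ)) * V2 (i : ℤ) (j : ℤ)) := by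
        rw [Finset.mul_sum]
    _ = (h / k) * -(∑ j ∈ Finset.range Ny, (V2 (i : ℤ) ((j + 1 : ℕ) : ℤ) - V2 (i : ℤ) (j : ℤ)) ^ 2) := by rw [key]
    _ = -(∑ j ∈ Finset.range Ny, h * k * dY k V2 (i : ℤ) (j : ℤ) * dY k V2 (i : ℤ) (j : ℤ)) := by
        rw [mul_neg, neg_inj, Finset.mul_sum]
        apply Finset.sum_congr rfl
        intro j _
        have c1 : ((j + 1 : ℕ) : ℤ) = (j : ℤ) + 1 := by push_cast; ring
        rw [c1]
        unfold dY
        field_simp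

lemma kw_cast (Ny : ℕ) (k : ℝ) (j : ℕ) :
    kw Ny k (j : ℤ) = if j = 0 ∨ j = Ny then k / 2 else k := by
  unfold kw
  refine if_congr ?_ rfl rfl
  constructor
  · rintro (hh | hh)
    · exact Or.inl (by exact_mod_cast hh)
    · exact Or.inr (by exact_mod_cast hh)
  · rintro (hh | hh) <;> subst hh <;> simp

lemma hw_cast (Nx : ℕ) (h : ℝ) (i : ℕ) :
    hw Nx h (i : ℤ) = if i = 0 ∨ i = Nx then h / 2 else h := by
  unfold hw
  refine if_congr ?_ rfl rfl
  constructor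
  · rintro (hh | hh)
    · exact Or.inl (by exact_mod_cast hh)
    · exact Or.inr (by exact_mod_cast hh)
  · rintro (hh | hh) <;> subst hh <;> simp

/-- y-direction viscous sum for a u1-type function (weighted). -/
lemma sum_dYDY_u1 (Nx Ny : ℕ) (hNy : 1 ≤ Ny) (h k : ℝ) (hk : k ≠ 0) (V1 : G)
    (hb : ∀ i : ℤ, V1 i (-1) = 0 ∧ V1 i (Ny : ℤ) = 0) :
    ∑ i ∈ Finset.Ico 1 Nx, ∑ j ∈ Finset.range Ny, h * k * dYDY Ny k V1 (i : ℤ) (j : ℤ) * V1 (i : ℤ) (j : ℤ)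
      = -ipTy Nx Ny h k (DY Ny k V1) (DY Ny k V1) := by
  unfold ipTy
  rw [← Finset.sum_neg_distrib]
  apply Finset.sum_congr rfl
  intro i _
  have key := visc_w_aux Ny hNy k hk (fun j : ℕ => V1 (i : ℤ) (j : ℤ))
      (fun j : ℕ => DY Ny k V1 (i : ℤ) (j : ℤ))
      (by
        unfold DY kw
        norm_num [(hb (i : ℤ)).1])
      (by
        unfold DY kw
        have c2 : ((Ny - 1 : ℕ) : ℤ) = (Ny : ℤ) - 1 := by omega
        rw [c2]
        norm_num [(hb (i : ℤ)).2])
      (by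
        intro j hj1 hj2
        unfold DY kw
        have c2 : ((j - 1 : ℕ) : ℤ) = (j : ℤ) - 1 := by omega
        rw [c2, if_neg (by omega)])
  calc ∑ j ∈ Finset.range Ny, h * k * dYDY Ny k V1 (i : ℤ) (j : ℤ) * V1 (i : ℤ) (j : ℤ)
      = ∑ j ∈ Finset.range Ny, h *
          ((DY Ny k V1 (i : ℤ) ((j + 1 : ℕ) : ℤ) - DY Ny k V1 (i : ℤ) (j : ℤ)) * V1 (i : ℤ) (j : ℤ)) := by
        apply Finset.sum_congr rfl
        intro j _
        have c1 : ((j + 1 : ℕ) : ℤ) = (j : ℤ) + 1 := by push_cast; ring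
        rw [c1]
        unfold dYDY
        field_simp
    _ = h * ∑ j ∈ Finset.range Ny,
          ((DY Ny k V1 (i : ℤ) ((j + 1 : ℕ) : ℤ) - DY Ny k V1 (i : ℤ) (j : ℤ)) * V1 (i : ℤ) (j : ℤ)) := by
        rw [Finset.mul_sum]
    _ = h * -(∑ j ∈ Finset.range (Ny + 1), (if j = 0 ∨ j = Ny then k / 2 else k) * DY Ny k V1 (i : ℤ) (j : ℤ) ^ 2) := by
        rw [key]
    _ = -(∑ j ∈ Finset.range (Ny + 1), h * kw Ny k (j : ℤ) * DY Ny k V1 (i : ℤ) (j : ℤ) * DY Ny k V1 (i : ℤ) (j : ℤ)) := by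
        rw [mul_neg, neg_inj, Finset.mul_sum]
        apply Finset.sum_congr rfl
        intro j _
        rw [kw_cast]
        ring

/-- x-direction viscous sum for a u2-type function (weighted). -/
lemma sum_dXDX_u2 (Nx Ny : ℕ) (hNx : 1 ≤ Nx) (h k : ℝ) (hh : h ≠ 0) (V2 : G)
    (hb : ∀ j : ℤ, V2 (-1) j = 0 ∧ V2 (Nx : ℤ) j = 0) :
    ∑ i ∈ Finset.range Nx, ∑ j ∈ Finset.Ico 1 Ny, h * k * dXDX Nx h V2 (i : ℤ) (j : ℤ) * V2 (i : ℤ) (j : ℤ)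
      = -ipTx Nx Ny h k (DX Nx h V2) (DX Nx h V2) := by
  unfold ipTx
  calc ∑ i ∈ Finset.range Nx, ∑ j ∈ Finset.Ico 1 Ny, h * k * dXDX Nx h V2 (i : ℤ) (j : ℤ) * V2 (i : ℤ) (j : ℤ)
      = ∑ j ∈ Finset.Ico 1 Ny, ∑ i ∈ Finset.range Nx, h * k * dXDX Nx h V2 (i : ℤ) (j : ℤ) * V2 (i : ℤ) (j : ℤ) :=
        Finset.sum_comm
    _ = ∑ j ∈ Finset.Ico 1 Ny, -(∑ i ∈ Finset.range (Nx + 1), hw Nx h (i : ℤ) * k * DX Nx h V2 (i : ℤ) (j : ℤ) * DX Nx h V2 (i : ℤ) (j : ℤ)) := by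
        apply Finset.sum_congr rfl
        intro j _
        have key := visc_w_aux Nx hNx h hh (fun i : ℕ => V2 (i : ℤ) (j : ℤ))
            (fun i : ℕ => DX Nx h V2 (i : ℤ) (j : ℤ))
            (by
              unfold DX hw
              norm_num [(hb (j : ℤ)).1])
            (by
              unfold DX hw
              have c2 : ((Nx - 1 : ℕ) : ℤ) = (Nx : ℤ) - 1 := by omega
              rw [c2]
              norm_num [(hb (j : ℤ)).2])
            (by
              intro i hi1 hi2
              unfold DX hw
              have c2 : ((i - 1 : ℕ) : ℤ) = (i : ℤ) - 1 := by omega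
              rw [c2, if_neg (by omega)])
        calc ∑ i ∈ Finset.range Nx, h * k * dXDX Nx h V2 (i : ℤ) (j : ℤ) * V2 (i : ℤ) (j : ℤ)
            = ∑ i ∈ Finset.range Nx, k *
                ((DX Nx h V2 ((i + 1 : ℕ) : ℤ) (j : ℤ) - DX Nx h V2 (i : ℤ) (j : ℤ)) * V2 (i : ℤ) (j : ℤ)) := by
              apply Finset.sum_congr rfl
              intro i _
              have c1 : ((i + 1 : ℕ) : ℤ) = (i : ℤ) + 1 := by push_cast; ring
              rw [c1]
              unfold dXDX
              field_simp
          _ = k * ∑ i ∈ Finset.range Nx,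
                ((DX Nx h V2 ((i + 1 : ℕ) : ℤ) (j : ℤ) - DX Nx h V2 (i : ℤ) (j : ℤ)) * V2 (i : ℤ) (j : ℤ)) := by
              rw [Finset.mul_sum]
          _ = k * -(∑ i ∈ Finset.range (Nx + 1), (if i = 0 ∨ i = Nx then h / 2 else h) * DX Nx h V2 (i : ℤ) (j : ℤ) ^ 2) := by
              rw [key]
          _ = -(∑ i ∈ Finset.range (Nx + 1), hw Nx h (i : ℤ) * k * DX Nx h V2 (i : ℤ) (j : ℤ) * DX Nx h V2 (i : ℤ) (j : ℤ)) := by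
              rw [mul_neg, neg_inj, Finset.mul_sum]
              apply Finset.sum_congr rfl
              intro i _
              rw [hw_cast]
              ring
    _ = -(∑ j ∈ Finset.Ico 1 Ny, ∑ i ∈ Finset.range (Nx + 1), hw Nx h (i : ℤ) * k * DX Nx h V2 (i : ℤ) (j : ℤ) * DX Nx h V2 (i : ℤ) (j : ℤ)) := by
        rw [← Finset.sum_neg_distrib]
    _ = -∑ i ∈ Finset.range (Nx + 1), ∑ j ∈ Finset.Ico 1 Ny, hw Nx h (i : ℤ) * k * DX Nx h V2 (i : ℤ) (j : ℤ) * DX Nx h V2 (i : ℤ) (j : ℤ) := by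
        rw [neg_inj]
        exact Finset.sum_comm

/-- The pressure term vanishes on discretely divergence-free fields. -/
lemma sum_pressure (Nx Ny : ℕ) (hNx : 1 ≤ Nx) (hNy : 1 ≤ Ny) (h k : ℝ) (hh : h ≠ 0) (hk : k ≠ 0)
    (P V1 V2 : G)
    (hb1 : ∀ j : ℤ, V1 0 j = 0 ∧ V1 (Nx : ℤ) j = 0)
    (hb2 : ∀ i : ℤ, V2 i 0 = 0 ∧ V2 i (Ny : ℤ) = 0)
    (hdiv : DivFree Nx Ny h k V1 V2) :
    ∑ i ∈ Finset.Ico 1 Nx, ∑ j ∈ Finset.range Ny, h * k * DX Nx h P (i : ℤ) (j : ℤ) * V1 (i : ℤ) (j : ℤ)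
      + ∑ i ∈ Finset.range Nx, ∑ j ∈ Finset.Ico 1 Ny, h * k * DY Ny k P (i : ℤ) (j : ℤ) * V2 (i : ℤ) (j : ℤ)
      = 0 := by
  have T1 : ∑ i ∈ Finset.Ico 1 Nx, ∑ j ∈ Finset.range Ny, h * k * DX Nx h P (i : ℤ) (j : ℤ) * V1 (i : ℤ) (j : ℤ)
      = ∑ i ∈ Finset.range Nx, ∑ j ∈ Finset.range Ny, -(h * k * P (i : ℤ) (j : ℤ) * dX h V1 (i : ℤ) (j : ℤ)) := by
    calc ∑ i ∈ Finset.Ico 1 Nx, ∑ j ∈ Finset.range Ny, h * k * DX Nx h P (i : ℤ) (j : ℤ) * V1 (i : ℤ) (j : ℤ)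
        = ∑ j ∈ Finset.range Ny, ∑ i ∈ Finset.Ico 1 Nx, h * k * DX Nx h P (i : ℤ) (j : ℤ) * V1 (i : ℤ) (j : ℤ) :=
          Finset.sum_comm
      _ = ∑ j ∈ Finset.range Ny, ∑ i ∈ Finset.range Nx, -(h * k * P (i : ℤ) (j : ℤ) * dX h V1 (i : ℤ) (j : ℤ)) := by
          apply Finset.sum_congr rfl
          intro j _
          have key := abel_aux Nx hNx (fun i : ℕ => P (i : ℤ) (j : ℤ)) (fun i : ℕ => V1 (i : ℤ) (j : ℤ))
            ((hb1 (j : ℤ)).1) ((hb1 (j : ℤ)).2)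
          calc ∑ i ∈ Finset.Ico 1 Nx, h * k * DX Nx h P (i : ℤ) (j : ℤ) * V1 (i : ℤ) (j : ℤ)
              = ∑ i ∈ Finset.Ico 1 Nx, k * ((P (i : ℤ) (j : ℤ) - P ((i - 1 : ℕ) : ℤ) (j : ℤ)) * V1 (i : ℤ) (j : ℤ)) := by
                apply Finset.sum_congr rfl
                intro i hi
                simp only [Finset.mem_Ico] at hi
                have c2 : ((i - 1 : ℕ) : ℤ) = (i : ℤ) - 1 := by omega
                have hwi : hw Nx h (i : ℤ) = h := by unfold hw; rw [if_neg (by omega)]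
                rw [c2]
                unfold DX
                rw [hwi]
                field_simp
            _ = k * ∑ i ∈ Finset.Ico 1 Nx, ((P (i : ℤ) (j : ℤ) - P ((i - 1 : ℕ) : ℤ) (j : ℤ)) * V1 (i : ℤ) (j : ℤ)) := by
                rw [Finset.mul_sum]
            _ = k * -(∑ i ∈ Finset.range Nx, P (i : ℤ) (j : ℤ) * (V1 ((i + 1 : ℕ) : ℤ) (j : ℤ) - V1 (i : ℤ) (j : ℤ))) := by
                rw [key]
            _ = ∑ i ∈ Finset.range Nx, -(h * k * P (i : ℤ) (j : ℤ) * dX h V1 (i : ℤ) (j : ℤ)) := by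
                rw [Finset.sum_neg_distrib, mul_neg, neg_inj, Finset.mul_sum]
                apply Finset.sum_congr rfl
                intro i _
                have c1 : ((i + 1 : ℕ) : ℤ) = (i : ℤ) + 1 := by push_cast; ring
                rw [c1]
                unfold dX
                field_simp
      _ = ∑ i ∈ Finset.range Nx, ∑ j ∈ Finset.range Ny, -(h * k * P (i : ℤ) (j : ℤ) * dX h V1 (i : ℤ) (j : ℤ)) :=
          Finset.sum_comm
  have T2 : ∑ i ∈ Finset.range Nx, ∑ j ∈ Finset.Ico 1 Ny, h * k * DY Ny k P (i : ℤ) (j : ℤ) * V2 (i : ℤ) (j : ℤ)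
      = ∑ i ∈ Finset.range Nx, ∑ j ∈ Finset.range Ny, -(h * k * P (i : ℤ) (j : ℤ) * dY k V2 (i : ℤ) (j : ℤ)) := by
    apply Finset.sum_congr rfl
    intro i _
    have key := abel_aux Ny hNy (fun j : ℕ => P (i : ℤ) (j : ℤ)) (fun j : ℕ => V2 (i : ℤ) (j : ℤ))
      ((hb2 (i : ℤ)).1) ((hb2 (i : ℤ)).2)
    calc ∑ j ∈ Finset.Ico 1 Ny, h * k * DY Ny k P (i : ℤ) (j : ℤ) * V2 (i : ℤ) (j : ℤ)
        = ∑ j ∈ Finset.Ico 1 Ny, h * ((P (i : ℤ) (j : ℤ) - P (i : ℤ) ((j - 1 : ℕ) : ℤ)) * V2 (i : ℤ) (j : ℤ)) := by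
          apply Finset.sum_congr rfl
          intro j hj
          simp only [Finset.mem_Ico] at hj
          have c2 : ((j - 1 : ℕ) : ℤ) = (j : ℤ) - 1 := by omega
          have hwj : kw Ny k (j : ℤ) = k := by unfold kw; rw [if_neg (by omega)]
          rw [c2]
          unfold DY
          rw [hwj]
          field_simp
      _ = h * ∑ j ∈ Finset.Ico 1 Ny, ((P (i : ℤ) (j : ℤ) - P (i : ℤ) ((j - 1 : ℕ) : ℤ)) * V2 (i : ℤ) (j : ℤ)) := by
          rw [Finset.mul_sum]
      _ = h * -(∑ j ∈ Finset.range Ny, P (i : ℤ) (j : ℤ) * (V2 (i : ℤ) ((j + 1 : ℕ) : ℤ) - V2 (i : ℤ) (j : ℤ))) := by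
          rw [key]
      _ = ∑ j ∈ Finset.range Ny, -(h * k * P (i : ℤ) (j : ℤ) * dY k V2 (i : ℤ) (j : ℤ)) := by
          rw [Finset.sum_neg_distrib, mul_neg, neg_inj, Finset.mul_sum]
          apply Finset.sum_congr rfl
          intro j _
          have c1 : ((j + 1 : ℕ) : ℤ) = (j : ℤ) + 1 := by push_cast; ring
          rw [c1]
          unfold dY
          field_simp
  rw [T1, T2, ← Finset.sum_add_distrib]
  apply Finset.sum_eq_zero
  intro i hi
  rw [← Finset.sum_add_distrib]
  apply Finset.sum_eq_zero
  intro j hj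
  simp only [Finset.mem_range] at hi hj
  have hd := hdiv (i : ℤ) (j : ℤ) (by positivity) (by exact_mod_cast hi) (by positivity) (by exact_mod_cast hj)
  linear_combination (-(h * k * P (i : ℤ) (j : ℤ))) * hd

lemma l2sq_nonneg (Nx Ny : ℕ) (h k : ℝ) (hh : 0 ≤ h) (hk : 0 ≤ k) (w1 w2 : G) :
    0 ≤ l2sq Nx Ny h k w1 w2 := by
  unfold l2sq ipTM ipMT
  apply add_nonneg <;>
  · apply Finset.sum_nonneg
    intro i _
    apply Finset.sum_nonneg
    intro j _
    first
      | nlinarith [mul_nonneg (mul_nonneg hh hk) (mul_self_nonneg (w1 (i:ℤ) (j:ℤ)))]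
      | nlinarith [mul_nonneg (mul_nonneg hh hk) (mul_self_nonneg (w2 (i:ℤ) (j:ℤ)))]


end SAVMAC

/-- **Unconditional energy stability of the fully discrete SAV-MAC scheme**
(Theorem `thm_discrete total energy`): in the absence of the external force
(`f₁^{n+1/2} = f₂^{n+1/2} = 0`), if `(U^{n+1}, P^{n+1/2}, Q^{n+1})` solves one step of the
fully discrete SAV-MAC scheme (with `Ũ^{n+1/2} = (3U^n - U^{n-1})/2`, and `U^n` satisfying
the boundary conditions and discrete incompressibility), then for any `Δt > 0`
`|Q^{n+1}|² - |Q^n|² = -ν Δt ‖DU^{n+1/2}‖²`. -/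
theorem SAVMAC.fully_discrete_energy_stability
    (Nx Ny : ℕ) (hNx : 1 ≤ Nx) (hNy : 1 ≤ Ny)
    (h k Δt ν δ : ℝ) (hh : 0 < h) (hk : 0 < k) (hΔt : 0 < Δt) (hν : 0 < ν) (hδ : 0 < δ)
    (um1 um2 u1 u2 v1 v2 P : SAVMAC.G) (Qn Qn1 : ℝ)
    (hBCprev : SAVMAC.BC Nx Ny um1 um2)
    (hBCn : SAVMAC.BC Nx Ny u1 u2)
    (hdivn : SAVMAC.DivFree Nx Ny h k u1 u2)
    (hstep : SAVMAC.SchemeStep Nx Ny h k Δt ν δ (fun _ _ => 0) (fun _ _ => 0)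
      (fun i j => (3 * u1 i j - um1 i j) / 2) (fun i j => (3 * u2 i j - um2 i j) / 2)
      u1 u2 v1 v2 P Qn Qn1) :
    |Qn1| ^ 2 - |Qn| ^ 2 =
      -(ν * Δt * SAVMAC.Dsq Nx Ny h k
        (fun i j => (u1 i j + v1 i j) / 2) (fun i j => (u2 i j + v2 i j) / 2)) := by
  obtain ⟨hQ, hm1, hm2, hsav, hdiv1, hbc1⟩ := hstep
  set w1 : G := fun i j => (3 * u1 i j - um1 i j) / 2 with hw1def
  set w2 : G := fun i j => (3 * u2 i j - um2 i j) / 2 with hw2def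
  set V1h : G := fun a b => (u1 a b + v1 a b) / 2 with hV1hdef
  set V2h : G := fun a b => (u2 a b + v2 a b) / 2 with hV2hdef
  set Qh : ℝ := (Qn + Qn1) / 2 with hQhdef
  set B : ℝ := Bh Nx Ny h k δ w1 w2 with hBdef
  -- positivity of B
  have hBpos : 0 < B := by
    rw [hBdef]
    unfold Bh
    apply Real.sqrt_pos.mpr
    have := l2sq_nonneg Nx Ny h k hh.le hk.le w1 w2
    linarith
  have hBne : B ≠ 0 := ne_of_gt hBpos
  -- boundary conditions for the averaged velocity
  have hbV1x : ∀ j : ℤ, V1h 0 j = 0 ∧ V1h (Nx : ℤ) j = 0 := by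
    intro j
    obtain ⟨a1, a2⟩ := hBCn.1 j
    obtain ⟨b1, b2⟩ := hbc1.1 j
    constructor <;> simp [hV1hdef, a1, a2, b1, b2]
  have hbV1y : ∀ i : ℤ, V1h i (-1) = 0 ∧ V1h i (Ny : ℤ) = 0 := by
    intro i
    obtain ⟨a1, a2⟩ := hBCn.2.1 i
    obtain ⟨b1, b2⟩ := hbc1.2.1 i
    constructor <;> simp [hV1hdef, a1, a2, b1, b2]
  have hbV2x : ∀ j : ℤ, V2h (-1) j = 0 ∧ V2h (Nx : ℤ) j = 0 := by
    intro j
    obtain ⟨a1, a2⟩ := hBCn.2.2.1 j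
    obtain ⟨b1, b2⟩ := hbc1.2.2.1 j
    constructor <;> simp [hV2hdef, a1, a2, b1, b2]
  have hbV2y : ∀ i : ℤ, V2h i 0 = 0 ∧ V2h i (Ny : ℤ) = 0 := by
    intro i
    obtain ⟨a1, a2⟩ := hBCn.2.2.2 i
    obtain ⟨b1, b2⟩ := hbc1.2.2.2 i
    constructor <;> simp [hV2hdef, a1, a2, b1, b2]
  -- divergence freedom for the averaged velocity
  have hdivV : DivFree Nx Ny h k V1h V2h := by
    intro i j h1 h2 h3 h4
    have d1 := hdivn i j h1 h2 h3 h4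
    have d2 := hdiv1 i j h1 h2 h3 h4
    unfold dX dY at d1 d2 ⊢
    simp only [hV1hdef, hV2hdef]
    field_simp at d1 d2 ⊢
    linarith
  -- first momentum sum
  have hip1 : ipTM Nx Ny h k (fun a b => (v1 a b - u1 a b) / Δt) V1h
      = -(Qh / B) * ipTM Nx Ny h k (N1 Ny h k w1 w2) V1h
        + ν * (∑ i ∈ Finset.Ico 1 Nx, ∑ j ∈ Finset.range Ny, h * k * DXdX h V1h (i : ℤ) (j : ℤ) * V1h (i : ℤ) (j : ℤ))
        + ν * (∑ i ∈ Finset.Ico 1 Nx, ∑ j ∈ Finset.range Ny, h * k * dYDY Ny k V1h (i : ℤ) (j : ℤ) * V1h (i : ℤ) (j : ℤ))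
        - (∑ i ∈ Finset.Ico 1 Nx, ∑ j ∈ Finset.range Ny, h * k * DX Nx h P (i : ℤ) (j : ℤ) * V1h (i : ℤ) (j : ℤ)) := by
    unfold ipTM
    rw [Finset.mul_sum, Finset.mul_sum, Finset.mul_sum]
    simp only [Finset.mul_sum]
    rw [← Finset.sum_add_distrib, ← Finset.sum_add_distrib, ← Finset.sum_sub_distrib]
    apply Finset.sum_congr rfl
    intro i hi
    rw [← Finset.sum_add_distrib, ← Finset.sum_add_distrib, ← Finset.sum_sub_distrib]
    apply Finset.sum_congr rfl
    intro j hj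
    simp only [Finset.mem_Ico, Finset.mem_range] at hi hj
    have E := hm1 (i : ℤ) (j : ℤ) (by exact_mod_cast hi.1) (by exact_mod_cast hi.2)
      (by positivity) (by exact_mod_cast hj)
    simp only at E
    linear_combination (h * k * V1h (i : ℤ) (j : ℤ)) * E
  -- second momentum sum
  have hip2 : ipMT Nx Ny h k (fun a b => (v2 a b - u2 a b) / Δt) V2h
      = -(Qh / B) * ipMT Nx Ny h k (N2 Nx h k w1 w2) V2h
        + ν * (∑ i ∈ Finset.range Nx, ∑ j ∈ Finset.Ico 1 Ny, h * k * DYdY k V2h (i : ℤ) (j : ℤ) * V2h (i : ℤ) (j : ℤ))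
        + ν * (∑ i ∈ Finset.range Nx, ∑ j ∈ Finset.Ico 1 Ny, h * k * dXDX Nx h V2h (i : ℤ) (j : ℤ) * V2h (i : ℤ) (j : ℤ))
        - (∑ i ∈ Finset.range Nx, ∑ j ∈ Finset.Ico 1 Ny, h * k * DY Ny k P (i : ℤ) (j : ℤ) * V2h (i : ℤ) (j : ℤ)) := by
    unfold ipMT
    rw [Finset.mul_sum, Finset.mul_sum, Finset.mul_sum]
    simp only [Finset.mul_sum]
    rw [← Finset.sum_add_distrib, ← Finset.sum_add_distrib, ← Finset.sum_sub_distrib]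
    apply Finset.sum_congr rfl
    intro i hi
    rw [← Finset.sum_add_distrib, ← Finset.sum_add_distrib, ← Finset.sum_sub_distrib]
    apply Finset.sum_congr rfl
    intro j hj
    simp only [Finset.mem_Ico, Finset.mem_range] at hi hj
    have E := hm2 (i : ℤ) (j : ℤ) (by positivity) (by exact_mod_cast hi)
      (by exact_mod_cast hj.1) (by exact_mod_cast hj.2)
    simp only at E
    linear_combination (h * k * V2h (i : ℤ) (j : ℤ)) * E
  -- summation-by-parts results
  have hx1 := sum_DXdX_u1 Nx Ny hNx h k (ne_of_gt hh) V1h hbV1x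
  have hy1 := sum_dYDY_u1 Nx Ny hNy h k (ne_of_gt hk) V1h hbV1y
  have hy2 := sum_DYdY_u2 Nx Ny hNy h k (ne_of_gt hk) V2h hbV2y
  have hx2 := sum_dXDX_u2 Nx Ny hNx h k (ne_of_gt hh) V2h hbV2x
  have hp := sum_pressure Nx Ny hNx hNy h k (ne_of_gt hh) (ne_of_gt hk) P V1h V2h hbV1x hbV2y hdivV
  -- combined identity for the discrete time derivative
  have hsum : ipl2 Nx Ny h k (fun a b => (v1 a b - u1 a b) / Δt) (fun a b => (v2 a b - u2 a b) / Δt) V1h V2h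
      = -(Qh / B) * ipl2 Nx Ny h k (N1 Ny h k w1 w2) (N2 Nx h k w1 w2) V1h V2h
        - ν * Dsq Nx Ny h k V1h V2h := by
    unfold ipl2 Dsq
    linear_combination hip1 + hip2 + ν * hx1 + ν * hy1 + ν * hy2 + ν * hx2 - hp
  -- conclude from the SAV update
  have h1 : Qn1 - Qn = Δt * ((1 / (2 * B)) * ipl2 Nx Ny h k (N1 Ny h k w1 w2) (N2 Nx h k w1 w2) V1h V2h
      + (1 / (2 * Qh)) * ipl2 Nx Ny h k (fun a b => (v1 a b - u1 a b) / Δt) (fun a b => (v2 a b - u2 a b) / Δt) V1h V2h) := by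
    rw [div_eq_iff (ne_of_gt hΔt)] at hsav
    linarith [hsav]
  calc |Qn1| ^ 2 - |Qn| ^ 2 = Qn1 ^ 2 - Qn ^ 2 := by rw [sq_abs, sq_abs]
    _ = (2 * Qh) * (Qn1 - Qn) := by rw [hQhdef]; ring
    _ = (2 * Qh) * (Δt * ((1 / (2 * B)) * ipl2 Nx Ny h k (N1 Ny h k w1 w2) (N2 Nx h k w1 w2) V1h V2h
        + (1 / (2 * Qh)) * ipl2 Nx Ny h k (fun a b => (v1 a b - u1 a b) / Δt) (fun a b => (v2 a b - u2 a b) / Δt) V1h V2h)) := by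
        rw [h1]
    _ = Δt * (Qh / B) * ipl2 Nx Ny h k (N1 Ny h k w1 w2) (N2 Nx h k w1 w2) V1h V2h
        + Δt * ipl2 Nx Ny h k (fun a b => (v1 a b - u1 a b) / Δt) (fun a b => (v2 a b - u2 a b) / Δt) V1h V2h := by
        field_simp
    _ = -(ν * Δt * Dsq Nx Ny h k V1h V2h) := by
        rw [hsum]
        ring
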